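/- A binary word w is prefix normal (with respect to a) if and only if every factor v of w with |v|_a = i satisfies |v| ≥ pos_a(w,i), where pos_a(w,i) is the position of the i-th occurrence of a in w (i.e., the least k with |w_1⋯w_k|_a = i). -/

import Mathlib

/- Binary words are `List Bool`, with letter `a = false` and `b = true`
   (so that `a < b` in the `Bool` order). -/

/-- number of `a`'s in the prefix of length `k` -/
def Pa (w : List Bool) (k : ℕ) : ℕ := (w.take k).count false

/-- number of `b`'s in the prefix of length `k` -/
def Pb (w : List Bool) (k : ℕ) : ℕ := (w.take k).count true

/-- maximum number of `a`'s in a factor of `w` of length `k` -/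
noncomputable def Fa (w : List Bool) (k : ℕ) : ℕ :=
  sSup {n | ∃ v : List Bool, v <:+: w ∧ v.length = k ∧ v.count false = n}

/-- maximum number of `b`'s in a factor of `w` of length `k` -/
noncomputable def Fb (w : List Bool) (k : ℕ) : ℕ :=
  sSup {n | ∃ v : List Bool, v <:+: w ∧ v.length = k ∧ v.count true = n}

/-- minimum number of `a`'s in a factor of `w` of length `k` -/
noncomputable def fa (w : List Bool) (k : ℕ) : ℕ :=
  sInf {n | ∃ v : List Bool, v <:+: w ∧ v.length = k ∧ v.count false = n}

/-- `w` is prefix normal w.r.t. `a`: no factor has more `a`'s than the prefix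
    of the same length -/
def PrefixNormal (w : List Bool) : Prop :=
  ∀ v : List Bool, v <:+: w → v.count false ≤ Pa w v.length

/-- position of the `i`-th `a` in `w` -/
noncomputable def posA (w : List Bool) (i : ℕ) : ℕ := sInf {k | Pa w k = i}

/-- `u` is the prefix normal form of `w` w.r.t. `a` -/
def IsPNFa (w u : List Bool) : Prop :=
  u.length = w.length ∧ ∀ k ≤ w.length, Pa u k = Fa w k ∧ Fa u k = Fa w k

/-- `u` is the prefix normal form of `w` w.r.t. `b` -/
def IsPNFb (w u : List Bool) : Prop :=
  u.length = w.length ∧ ∀ k ≤ w.length, Pb u k = Fb w k ∧ Fb u k = Fb w k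

/-- the Parikh set of `w`: Parikh vectors `(|v|_a, |v|_b)` of factors of `w` -/
def ParikhSet (w : List Bool) : Set (ℕ × ℕ) :=
  {p | ∃ v : List Bool, v <:+: w ∧ p = (v.count false, v.count true)}

/-- Lyndon word: strictly lexicographically smaller than each proper nonempty suffix -/
def IsLyndon (w : List Bool) : Prop :=
  w ≠ [] ∧ ∀ v : List Bool, v <:+ w → v ≠ [] → v ≠ w → List.Lex (· < ·) w v

/-- pre-necklace: a power of the letter `b`, or a prefix of a Lyndon word -/
def PreNecklace (w : List Bool) : Prop :=
  (∃ n, w = List.replicate n true) ∨ ∃ v, IsLyndon v ∧ w <+: v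

lemma Pa_mono (w : List Bool) {k m : ℕ} (h : k ≤ m) : Pa w k ≤ Pa w m := by
  unfold Pa
  have : w.take k = (w.take m).take k := by rw [List.take_take, min_eq_left h]
  rw [this]
  exact ((w.take m).take_sublist k).count_le false

lemma Pa_step (w : List Bool) (k : ℕ) : Pa w (k + 1) ≤ Pa w k + 1 := by
  unfold Pa
  rw [show k + 1 = k + 1 from rfl, List.take_add, List.count_append]
  have h1 : ((w.drop k).take 1).count false ≤ 1 := by
    calc ((w.drop k).take 1).count false ≤ ((w.drop k).take 1).length :=
          List.count_le_length
      _ ≤ 1 := List.length_take_le _ _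
  omega

lemma ivt (f : ℕ → ℕ) (h0 : f 0 = 0) (hs : ∀ k, f (k + 1) ≤ f k + 1) :
    ∀ n i, i ≤ f n → ∃ k ≤ n, f k = i := by
  intro n
  induction n with
  | zero => intro i hi; exact ⟨0, le_refl 0, by omega⟩
  | succ n ih =>
    intro i hi
    by_cases h : i ≤ f n
    · obtain ⟨k, hk, hfk⟩ := ih i h
      exact ⟨k, Nat.le_succ_of_le hk, hfk⟩
    · have := hs n
      exact ⟨n + 1, le_refl _, by omega⟩


theorem stmt11 (w : List Bool) :
    PrefixNormal w ↔
      ∀ v : List Bool, v <:+: w → posA w (v.count false) ≤ v.length := by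
  constructor
  · intro hpn v hv
    have h1 : v.count false ≤ Pa w v.length := hpn v hv
    have h2 : Pa w 0 = 0 := by simp [Pa]
    obtain ⟨k, hk, hfk⟩ := ivt (Pa w) h2 (Pa_step w) v.length (v.count false) h1
    calc posA w (v.count false) ≤ k := Nat.sInf_le hfk
      _ ≤ v.length := hk
  · intro h v hv
    have hle : v.count false ≤ w.count false := hv.sublist.count_le false
    have h2 : Pa w 0 = 0 := by simp [Pa]
    have hw : Pa w w.length = w.count false := by simp [Pa]
    obtain ⟨k, _, hfk⟩ := ivt (Pa w) h2 (Pa_step w) w.length (v.count false)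
      (hw ▸ hle)
    have hne : posA w (v.count false) ∈ {k | Pa w k = v.count false} :=
      Nat.sInf_mem ⟨k, hfk⟩
    have hpos : posA w (v.count false) ≤ v.length := h v hv
    calc v.count false = Pa w (posA w (v.count false)) := hne.symm
      _ ≤ Pa w v.length := Pa_mono w hpos
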